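/- Let p be a prime, G a finite group, and Q a normal p-subgroup of G contained in the center Z(G). If a p-subgroup P ≤ G is p-centric in G and F_p(G)-radical, then Q ≤ P, and the image P/Q of P in the quotient group G/Q is p-centric in G/Q and F_p(G/Q)-radical. -/

import Mathlib

section auxlemmas
variable {G : Type*} [Group G]

lemma conj_mem_centralizer' {P : Subgroup G} {y c : G} (hy : y ∈ (Subgroup.normalizer (P : Set G)))
    (hc : c ∈ Subgroup.centralizer (P : Set G)) :
    y * c * y⁻¹ ∈ Subgroup.centralizer (P : Set G) := by
  rw [Subgroup.mem_centralizer_iff] at hc ⊢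
  intro x hx
  have h1 : y⁻¹ * x * y ∈ P := by
    have := (Subgroup.mem_normalizer_iff.mp ((Subgroup.normalizer (P : Set G)).inv_mem hy) x).mp hx
    simpa using this
  have h2 := hc _ h1
  calc x * (y * c * y⁻¹) = y * ((y⁻¹ * x * y) * c) * y⁻¹ := by group
    _ = y * (c * (y⁻¹ * x * y)) * y⁻¹ := by rw [h2]
    _ = y * c * y⁻¹ * x := by group

lemma sup_centralizer_decomp (P : Subgroup G) {g : G}
    (hg : g ∈ P ⊔ Subgroup.centralizer (P : Set G)) :
    ∃ y ∈ P, ∃ c ∈ Subgroup.centralizer (P : Set G), g = y * c := by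
  let S : Subgroup G :=
    { carrier := {g | ∃ y ∈ P, ∃ c ∈ Subgroup.centralizer (P : Set G), g = y * c}
      one_mem' := ⟨1, P.one_mem, 1, (Subgroup.centralizer _).one_mem, by simp⟩
      mul_mem' := by
        rintro a b ⟨y, hy, c, hcc, rfl⟩ ⟨y', hy', c', hc', rfl⟩
        refine ⟨y * y', P.mul_mem hy hy', (y'⁻¹ * c * y'⁻¹⁻¹) * c',
          (Subgroup.centralizer _).mul_mem
            (conj_mem_centralizer' ((Subgroup.normalizer (P : Set G)).inv_mem (Subgroup.le_normalizer hy')) hcc) hc', ?_⟩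
        group
      inv_mem' := by
        rintro a ⟨y, hy, c, hcc, rfl⟩
        refine ⟨y⁻¹, P.inv_mem hy, y * c⁻¹ * y⁻¹,
          conj_mem_centralizer' (Subgroup.le_normalizer hy) ((Subgroup.centralizer _).inv_mem hcc), ?_⟩
        group }
  have h1 : P ≤ S := fun x hx => ⟨x, hx, 1, (Subgroup.centralizer _).one_mem, by simp⟩
  have h2 : Subgroup.centralizer (P : Set G) ≤ S := fun x hx =>
    ⟨1, P.one_mem, x, hx, by simp⟩
  exact sup_le h1 h2 hg

lemma pp'_decomp (p : ℕ) (hp : p.Prime) [Finite G] (c : G) :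
    ∃ s t : G, c = s * t ∧ s * t = t * s ∧ (∃ i : ℤ, s = c ^ i) ∧ (∃ j : ℤ, t = c ^ j) ∧
      (∃ n : ℕ, s ^ p ^ n = 1) ∧ Nat.Coprime (orderOf t) p := by
  set n := orderOf c with hn
  have hn0 : n ≠ 0 := (orderOf_pos c).ne'
  set a := n.factorization p with ha
  set m := n / p ^ a with hm
  have hcop : Nat.Coprime p m := Nat.coprime_ordCompl hp hn0
  have hnm : p ^ a * m = n := Nat.ordProj_mul_ordCompl_eq_self n p
  have hcop2 : Nat.Coprime (p ^ a) m := hcop.pow_left a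
  have hbez : ((1 : ℕ) : ℤ) = (p ^ a : ℕ) * Nat.gcdA (p ^ a) m + (m : ℤ) * Nat.gcdB (p ^ a) m := by
    rw [← hcop2]; exact Nat.gcd_eq_gcd_ab (p ^ a) m
  set x := Nat.gcdA (p ^ a) m
  set y := Nat.gcdB (p ^ a) m
  have hcn : c ^ (n : ℤ) = 1 := by
    rw [zpow_natCast, hn, pow_orderOf_eq_one]
  refine ⟨c ^ ((m : ℤ) * y), c ^ ((p ^ a : ℕ) * x), ?_, ?_, ⟨_, rfl⟩, ⟨_, rfl⟩, ⟨a, ?_⟩, ?_⟩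
  · rw [← zpow_add]
    rw [show (m : ℤ) * y + (p ^ a : ℕ) * x = 1 by push_cast at hbez ⊢; linarith]
    simp
  · rw [← zpow_add, ← zpow_add, add_comm]
  · rw [← zpow_natCast, ← zpow_mul]
    have : (m : ℤ) * y * (p ^ a : ℕ) = (n : ℤ) * y := by
      push_cast [← hnm]; ring
    rw [this, zpow_mul, hcn, one_zpow]
  · have ht : (c ^ ((p ^ a : ℕ) * x)) ^ m = 1 := by
      rw [← zpow_natCast, ← zpow_mul]
      have : (p ^ a : ℕ) * x * (m : ℤ) = (n : ℤ) * x := by push_cast [← hnm]; ring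
      rw [this, zpow_mul, hcn, one_zpow]
    have hdvd : orderOf (c ^ ((p ^ a : ℕ) * x)) ∣ m := orderOf_dvd_of_pow_eq_one ht
    exact (Nat.Coprime.coprime_dvd_right hdvd hcop).symm

end auxlemmas

/-- A subgroup `P ≤ G` is `p`-centric in `G` if every element of `p`-power order in the
centralizer `C_G(P)` lies in `P`. -/
def IsPCentric (p : ℕ) {G : Type*} [Group G] (P : Subgroup G) : Prop :=
  ∀ g ∈ Subgroup.centralizer (P : Set G), (∃ n : ℕ, g ^ p ^ n = 1) → g ∈ P

/-- The subgroup `P ⬝ C_G(P)` of the normalizer `N_G(P)`, i.e. the kernel of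
`N_G(P) → Out_G(P)`. -/
def outKer {G : Type*} [Group G] (P : Subgroup G) : Subgroup (Subgroup.normalizer (P : Set G)) :=
  (P ⊔ Subgroup.centralizer (P : Set G)).subgroupOf (Subgroup.normalizer (P : Set G))

instance outKer_normal {G : Type*} [Group G] (P : Subgroup G) : (outKer P).Normal := by
  constructor
  intro n hn g
  rw [outKer, Subgroup.mem_subgroupOf] at hn ⊢
  have key : ∀ x : G, x ∈ (Subgroup.normalizer (P : Set G)) →
      ∀ y ∈ P ⊔ Subgroup.centralizer (P : Set G),
        x * y * x⁻¹ ∈ P ⊔ Subgroup.centralizer (P : Set G) := by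
    intro x hx y hy
    have hPle : P.map (MulAut.conj x).toMonoidHom
        ≤ P ⊔ Subgroup.centralizer (P : Set G) := by
      rintro _ ⟨y, hyP, rfl⟩
      exact Subgroup.mem_sup_left
        (by simpa using (Subgroup.mem_normalizer_iff.mp hx y).mp hyP)
    have hCle : (Subgroup.centralizer (P : Set G)).map (MulAut.conj x).toMonoidHom
        ≤ P ⊔ Subgroup.centralizer (P : Set G) := by
      rintro _ ⟨y, hyC, rfl⟩
      have hyC' : ∀ h ∈ P, h * y = y * h := fun h hh =>
        Subgroup.mem_centralizer_iff.mp hyC h hh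
      refine Subgroup.mem_sup_right (Subgroup.mem_centralizer_iff.mpr ?_)
      intro h hh
      have hh' : x⁻¹ * h * x ∈ P := by
        refine (Subgroup.mem_normalizer_iff.mp hx (x⁻¹ * h * x)).mpr ?_
        have : x * (x⁻¹ * h * x) * x⁻¹ = h := by group
        rw [this]
        exact hh
      have hcomm := hyC' _ hh'
      have : (MulAut.conj x).toMonoidHom y = x * y * x⁻¹ := by
        simp [MulAut.conj_apply]
      rw [this]
      calc h * (x * y * x⁻¹) = x * ((x⁻¹ * h * x) * y) * x⁻¹ := by group
        _ = x * (y * (x⁻¹ * h * x)) * x⁻¹ := by rw [hcomm]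
        _ = x * y * x⁻¹ * h := by group
    have hmap : (P ⊔ Subgroup.centralizer (P : Set G)).map (MulAut.conj x).toMonoidHom
        ≤ P ⊔ Subgroup.centralizer (P : Set G) := by
      rw [Subgroup.map_sup]
      exact sup_le hPle hCle
    have := hmap (Subgroup.mem_map_of_mem _ hy)
    simpa using this
  have := key (g : G) g.2 (n : G) hn
  simpa [mul_assoc] using this

/-- `Out_G(P) = N_G(P) / (P ⬝ C_G(P))`. -/
def OutG {G : Type*} [Group G] (P : Subgroup G) : Type _ :=
  (Subgroup.normalizer (P : Set G)) ⧸ outKer P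

instance {G : Type*} [Group G] (P : Subgroup G) : Group (OutG P) :=
  inferInstanceAs (Group ((Subgroup.normalizer (P : Set G)) ⧸ outKer P))

/-- A subgroup `P ≤ G` is `F_p(G)`-radical if `Out_G(P) = N_G(P)/(P ⬝ C_G(P))` has no
nontrivial normal `p`-subgroup. -/
def IsFpRadical (p : ℕ) {G : Type*} [Group G] (P : Subgroup G) : Prop :=
  ∀ K : Subgroup (OutG P), K.Normal → IsPGroup p K → K = ⊥

theorem stmt_18 (p : ℕ) (hp : p.Prime) {G : Type*} [Group G] [Finite G]
    (Q : Subgroup G) [hQN : Q.Normal] (hQZ : Q ≤ Subgroup.center G)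
    (hQp : IsPGroup p Q)
    (P : Subgroup G) (hP : IsPGroup p P) (hc : IsPCentric p P) (hr : IsFpRadical p P) :
    Q ≤ P ∧ IsPCentric p (P.map (QuotientGroup.mk' Q)) ∧
      IsFpRadical p (P.map (QuotientGroup.mk' Q)) := by
  haveI : Fact p.Prime := ⟨hp⟩
  have hrQ : ∀ K : Subgroup (↥(Subgroup.normalizer (P : Set G)) ⧸ outKer P), K.Normal → IsPGroup p K → K = ⊥ := hr
  set mkQ := QuotientGroup.mk' Q with hmkQdef
  set Pb := P.map mkQ with hPbdef
  set C := Subgroup.centralizer (P : Set G) with hCdef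
  set Cb := Subgroup.centralizer (Pb : Set (G ⧸ Q)) with hCbdef
  -- Q is central
  have hQcent : ∀ q ∈ Q, ∀ g : G, q * g = g * q :=
    fun q hq g => (Subgroup.mem_center_iff.mp (hQZ hq) g).symm
  -- Q ≤ P
  have hQP : Q ≤ P := by
    intro q hq
    apply hc q
    · rw [Subgroup.mem_centralizer_iff]
      intro x hx
      exact Subgroup.mem_center_iff.mp (hQZ hq) x
    · obtain ⟨k, hk⟩ := hQp ⟨q, hq⟩
      exact ⟨k, by simpa using congrArg Subtype.val hk⟩
  -- uniform exponent for Q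
  obtain ⟨e, he⟩ : ∃ e : ℕ, ∀ q ∈ Q, q ^ p ^ e = 1 := by
    obtain ⟨e, hcard⟩ := IsPGroup.iff_card.mp hQp
    refine ⟨e, fun q hq => ?_⟩
    have h1 : (⟨q, hq⟩ : Q) ^ Nat.card Q = 1 := pow_card_eq_one'
    rw [hcard] at h1
    simpa using congrArg Subtype.val h1
  -- commutator criterion
  have hcommQ : ∀ a b : G, a * b * a⁻¹ * b⁻¹ ∈ Q ↔ mkQ a * mkQ b = mkQ b * mkQ a := by
    intro a b
    rw [← commutatorElement_eq_one_iff_mul_comm, ← map_commutatorElement,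
      commutatorElement_def]
    exact (QuotientGroup.eq_one_iff _).symm
  -- the preimage of the centralizer of Pb
  set X := Subgroup.comap mkQ Cb with hXdef
  have hmemX : ∀ g : G, g ∈ X ↔ ∀ x ∈ P, g * x * g⁻¹ * x⁻¹ ∈ Q := by
    intro g
    constructor
    · intro hg x hx
      rw [hcommQ]
      exact (Subgroup.mem_centralizer_iff.mp (Subgroup.mem_comap.mp hg) (mkQ x)
        (Subgroup.mem_map_of_mem _ hx)).symm
    · intro h
      rw [Subgroup.mem_comap, hCbdef, Subgroup.mem_centralizer_iff]
      intro b hb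
      obtain ⟨x, hx, rfl⟩ := Subgroup.mem_map.mp hb
      exact ((hcommQ g x).mp (h x hx)).symm
  have hCX : C ≤ X := by
    intro c' hc'
    rw [hmemX]
    intro x hx
    have h1 := Subgroup.mem_centralizer_iff.mp hc' x hx
    have : c' * x * c'⁻¹ * x⁻¹ = 1 := by rw [← h1]; group
    rw [this]; exact Q.one_mem
  have hXN : X ≤ (Subgroup.normalizer (P : Set G)) := by
    intro g hg
    rw [Subgroup.mem_normalizer_iff]
    intro x
    constructor
    · intro hx
      have hq := (hmemX g).mp hg x hx
      have h2 : g * x * g⁻¹ = (g * x * g⁻¹ * x⁻¹) * x := by group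
      rw [h2]; exact P.mul_mem (hQP hq) hx
    · intro hx
      have hq := (hmemX g⁻¹).mp (X.inv_mem hg) _ hx
      have h2 : x = (g⁻¹ * (g * x * g⁻¹) * g⁻¹⁻¹ * (g * x * g⁻¹)⁻¹) * (g * x * g⁻¹) := by group
      rw [h2]; exact P.mul_mem (hQP hq) hx
  -- X has p-power exponent modulo C
  have hXC : ∀ g ∈ X, g ^ p ^ e ∈ C := by
    intro g hg
    rw [Subgroup.mem_centralizer_iff]
    intro x hx
    have hq : g * x * g⁻¹ * x⁻¹ ∈ Q := (hmemX g).mp hg x hx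
    set q := g * x * g⁻¹ * x⁻¹ with hqdef
    have hgx : g * x = q * x * g := by rw [hqdef]; group
    have key : ∀ mm : ℕ, g ^ mm * x = q ^ mm * x * g ^ mm := by
      intro mm
      induction mm with
      | zero => simp
      | succ k ih =>
        have hqk : q ^ k ∈ Q := Q.pow_mem hq k
        calc g ^ (k + 1) * x = g * (g ^ k * x) := by rw [pow_succ']; group
          _ = g * (q ^ k * x * g ^ k) := by rw [ih]
          _ = (g * q ^ k) * x * g ^ k := by group
          _ = (q ^ k * g) * x * g ^ k := by rw [hQcent _ hqk g]
          _ = q ^ k * (g * x) * g ^ k := by group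
          _ = q ^ k * (q * x * g) * g ^ k := by rw [hgx]
          _ = q ^ (k + 1) * x * g ^ (k + 1) := by rw [pow_succ, pow_succ']; group
    have := key (p ^ e)
    rw [he q hq, one_mul] at this
    exact this.symm
  -- the key step: X ≤ P ⊔ C, using radicality
  have hXPC : X ≤ P ⊔ C := by
    -- image of X in Out_G(P)
    set K' := ((X.subgroupOf (Subgroup.normalizer (P : Set G))).map (QuotientGroup.mk' (outKer P))) with hK'def
    have hNmapX : ∀ m : (Subgroup.normalizer (P : Set G)), ∀ n : G, n ∈ X → (m : G) * n * (m : G)⁻¹ ∈ X := by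
      intro m n hn
      rw [hmemX] at hn ⊢
      intro x hx
      have hx' : (m : G)⁻¹ * x * (m : G) ∈ P := by
        have := (Subgroup.mem_normalizer_iff.mp ((Subgroup.normalizer (P : Set G)).inv_mem m.2) x).mp hx
        simpa using this
      have hq := hn _ hx'
      set q := n * ((m:G)⁻¹ * x * (m:G)) * n⁻¹ * ((m:G)⁻¹ * x * (m:G))⁻¹ with hqdef
      have : (m:G) * n * (m:G)⁻¹ * x * ((m:G) * n * (m:G)⁻¹)⁻¹ * x⁻¹
          = (m:G) * q * (m:G)⁻¹ := by rw [hqdef]; group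
      rw [this]
      exact hQN.conj_mem q hq m
    have hK'norm : K'.Normal := by
      constructor
      intro k hk w
      obtain ⟨n, hn, rfl⟩ := Subgroup.mem_map.mp hk
      obtain ⟨m, rfl⟩ := QuotientGroup.mk'_surjective (outKer P) w
      rw [← map_inv, ← map_mul, ← map_mul]
      apply Subgroup.mem_map_of_mem
      rw [Subgroup.mem_subgroupOf] at hn ⊢
      have := hNmapX m (n : G) hn
      simpa using this
    have hK'p : IsPGroup p K' := by
      intro k
      obtain ⟨n, hn, hnk⟩ := Subgroup.mem_map.mp k.2
      rw [Subgroup.mem_subgroupOf] at hn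
      refine ⟨e, ?_⟩
      have h1 : (k : ↥(Subgroup.normalizer (P : Set G)) ⧸ outKer P) ^ p ^ e = 1 := by
        rw [← hnk, ← map_pow]
        have h2 : n ^ p ^ e ∈ (QuotientGroup.mk' (outKer P)).ker := by
          rw [QuotientGroup.ker_mk', outKer, Subgroup.mem_subgroupOf]
          have : ((n ^ p ^ e : (Subgroup.normalizer (P : Set G))) : G) = (n : G) ^ p ^ e := by simp
          rw [this]
          exact Subgroup.mem_sup_right (hXC _ hn)
        exact h2
      exact Subtype.ext (by simpa using h1)
    have hK'bot : K' = ⊥ := hrQ K' hK'norm hK'p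
    intro g hg
    have hgN : g ∈ (Subgroup.normalizer (P : Set G)) := hXN hg
    have h1 : QuotientGroup.mk' (outKer P) ⟨g, hgN⟩ ∈ K' :=
      Subgroup.mem_map_of_mem _ (Subgroup.mem_subgroupOf.mpr hg)
    rw [hK'bot, Subgroup.mem_bot] at h1
    have h2 : (⟨g, hgN⟩ : (Subgroup.normalizer (P : Set G))) ∈ (QuotientGroup.mk' (outKer P)).ker := h1
    rw [QuotientGroup.ker_mk', outKer, Subgroup.mem_subgroupOf] at h2
    exact h2
  -- preimage of Pb is P
  have hPcomap : Subgroup.comap mkQ Pb = P := by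
    rw [hPbdef, Subgroup.comap_map_eq, hmkQdef, QuotientGroup.ker_mk']
    exact sup_eq_left.mpr hQP
  refine ⟨hQP, ?_, ?_⟩
  · -- p-centric
    intro gb hgb hord
    obtain ⟨n₀, hn₀⟩ := hord
    obtain ⟨g, rfl⟩ := QuotientGroup.mk'_surjective Q gb
    have hgX : g ∈ X := Subgroup.mem_comap.mpr hgb
    obtain ⟨y, hy, c, hcc, hgyc⟩ := sup_centralizer_decomp P (hXPC hgX)
    obtain ⟨s, t, hst, hcm, ⟨i, hi⟩, ⟨j, hj⟩, ⟨a, hsa⟩, hcop⟩ := pp'_decomp p hp c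
    have hsC : s ∈ C := hi ▸ C.zpow_mem hcc i
    have htC : t ∈ C := hj ▸ C.zpow_mem hcc j
    have hsP : s ∈ P := hc s hsC ⟨a, hsa⟩
    have hwPb : mkQ (y * s) ∈ Pb := Subgroup.mem_map_of_mem _ (P.mul_mem hy hsP)
    have hgw : mkQ g = mkQ (y * s) * mkQ t := by
      rw [← map_mul, hgyc, hst, mul_assoc]
    have htCb : mkQ t ∈ Cb := Subgroup.mem_comap.mp (hCX htC)
    have hct : Commute (mkQ (y * s)) (mkQ t) :=
      (Subgroup.mem_centralizer_iff.mp htCb _ hwPb)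
    have hcwg : Commute (mkQ (y * s)) (mkQ g) := by
      rw [hgw]; exact (Commute.refl _).mul_right hct
    have hPbp : IsPGroup p Pb := hP.map mkQ
    obtain ⟨b, hb⟩ := hPbp ⟨mkQ (y * s), hwPb⟩
    have hb' : (mkQ (y * s)) ^ p ^ b = 1 := by simpa using congrArg Subtype.val hb
    have h1 : (mkQ g) ^ p ^ (n₀ + b) = 1 := by
      rw [pow_add, pow_mul, hn₀, one_pow]
    have h2 : (mkQ (y * s)) ^ p ^ (n₀ + b) = 1 := by
      rw [pow_add, mul_comm (p ^ n₀), pow_mul, hb', one_pow]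
    have ht1 : mkQ t = 1 := by
      have heq : mkQ t = (mkQ (y * s))⁻¹ * mkQ g := by rw [hgw]; group
      have hpow : (mkQ t) ^ p ^ (n₀ + b) = 1 := by
        rw [heq, hcwg.inv_left.mul_pow, inv_pow, h2, h1, inv_one, one_mul]
      have hd1 : orderOf (mkQ t) ∣ p ^ (n₀ + b) := orderOf_dvd_of_pow_eq_one hpow
      have hd2 : orderOf (mkQ t) ∣ orderOf t := orderOf_map_dvd mkQ t
      have hd : orderOf (mkQ t) ∣ Nat.gcd (orderOf t) (p ^ (n₀ + b)) := Nat.dvd_gcd hd2 hd1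
      rw [Nat.Coprime.gcd_eq_one (hcop.pow_right _)] at hd
      exact orderOf_eq_one_iff.mp (Nat.dvd_one.mp hd)
    rw [hgw, ht1, mul_one]
    exact hwPb
  · -- radical
    show ∀ K : Subgroup (↥(Subgroup.normalizer (Pb : Set (G ⧸ Q))) ⧸ outKer Pb), K.Normal → IsPGroup p K → K = ⊥
    have hNmap : ∀ m : G, m ∈ (Subgroup.normalizer (P : Set G)) → mkQ m ∈ (Subgroup.normalizer (Pb : Set (G ⧸ Q))) := by
      intro m hm
      rw [Subgroup.mem_normalizer_iff]
      intro b
      constructor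
      · intro hb
        obtain ⟨x, hx, rfl⟩ := Subgroup.mem_map.mp hb
        rw [← map_inv, ← map_mul, ← map_mul]
        exact Subgroup.mem_map_of_mem _ ((Subgroup.mem_normalizer_iff.mp hm x).mp hx)
      · intro hb
        obtain ⟨x, hx, hxe⟩ := Subgroup.mem_map.mp hb
        have hbe : b = mkQ (m⁻¹ * x * m) := by
          rw [map_mul, map_mul, map_inv, hxe]; group
        rw [hbe]
        apply Subgroup.mem_map_of_mem
        have := (Subgroup.mem_normalizer_iff.mp ((Subgroup.normalizer (P : Set G)).inv_mem hm) x).mp hx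
        simpa using this
    let φ : (Subgroup.normalizer (P : Set G)) →* (Subgroup.normalizer (Pb : Set (G ⧸ Q))) :=
      (mkQ.comp (Subgroup.normalizer (P : Set G)).subtype).codRestrict (Subgroup.normalizer (Pb : Set (G ⧸ Q))) (fun m => hNmap m m.2)
    let ψ : (Subgroup.normalizer (P : Set G)) →* (↥(Subgroup.normalizer (Pb : Set (G ⧸ Q))) ⧸ outKer Pb) := (QuotientGroup.mk' (outKer Pb)).comp φ
    have hψ1 : ∀ n : (Subgroup.normalizer (P : Set G)), ψ n = 1 ↔ n ∈ outKer P := by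
      intro n
      constructor
      · intro hn
        have h1 : φ n ∈ (QuotientGroup.mk' (outKer Pb)).ker := hn
        rw [QuotientGroup.ker_mk', outKer, Subgroup.mem_subgroupOf] at h1
        have h2 : mkQ (n : G) ∈ Pb ⊔ Cb := h1
        obtain ⟨yb, hyb, cb, hcb, hyc⟩ := sup_centralizer_decomp Pb h2
        obtain ⟨y, hyP, rfl⟩ := Subgroup.mem_map.mp hyb
        have h3 : y⁻¹ * (n : G) ∈ X := by
          rw [hXdef, Subgroup.mem_comap]
          have : mkQ (y⁻¹ * (n : G)) = cb := by
            rw [map_mul, map_inv, hyc]; group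
          rw [this]; exact hcb
        have h4 : (n : G) ∈ P ⊔ C := by
          have := Subgroup.mul_mem _ (Subgroup.mem_sup_left hyP) (hXPC h3)
          simpa using this
        rw [outKer, Subgroup.mem_subgroupOf]
        exact h4
      · intro hn
        rw [outKer, Subgroup.mem_subgroupOf] at hn
        obtain ⟨y, hy, c, hcc, hyc⟩ := sup_centralizer_decomp P hn
        have h1 : mkQ (n : G) ∈ Pb ⊔ Cb := by
          rw [hyc, map_mul]
          exact Subgroup.mul_mem _ (Subgroup.mem_sup_left (Subgroup.mem_map_of_mem _ hy))
            (Subgroup.mem_sup_right (Subgroup.mem_comap.mp (hCX hcc)))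
        show QuotientGroup.mk' (outKer Pb) (φ n) = 1
        have : φ n ∈ (QuotientGroup.mk' (outKer Pb)).ker := by
          rw [QuotientGroup.ker_mk', outKer, Subgroup.mem_subgroupOf]
          exact h1
        exact this
    have hψker : outKer P ≤ ψ.ker := fun n hn => (hψ1 n).mpr hn
    let θ : (↥(Subgroup.normalizer (P : Set G)) ⧸ outKer P) →* (↥(Subgroup.normalizer (Pb : Set (G ⧸ Q))) ⧸ outKer Pb) := QuotientGroup.lift (outKer P) ψ hψker
    have hθ_mk : ∀ n : (Subgroup.normalizer (P : Set G)), θ (QuotientGroup.mk' (outKer P) n) = ψ n :=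
      fun n => rfl
    have hθ_inj : ∀ z : ↥(Subgroup.normalizer (P : Set G)) ⧸ outKer P, θ z = 1 → z = 1 := by
      intro z hz
      obtain ⟨n, rfl⟩ := QuotientGroup.mk'_surjective (outKer P) z
      rw [hθ_mk] at hz
      have h1 := (hψ1 n).mp hz
      have : n ∈ (QuotientGroup.mk' (outKer P)).ker := by
        rw [QuotientGroup.ker_mk']; exact h1
      exact this
    have hθ_surj : Function.Surjective θ := by
      intro z
      obtain ⟨nb, rfl⟩ := QuotientGroup.mk'_surjective (outKer Pb) z
      obtain ⟨g, hg⟩ := QuotientGroup.mk'_surjective Q (nb : G ⧸ Q)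
      have hgN : g ∈ (Subgroup.normalizer (P : Set G)) := by
        rw [Subgroup.mem_normalizer_iff]
        intro x
        constructor
        · intro hx
          have h1 : mkQ (g * x * g⁻¹) ∈ Pb := by
            rw [map_mul, map_mul, map_inv, hg]
            exact (Subgroup.mem_normalizer_iff.mp nb.2 (mkQ x)).mp
              (Subgroup.mem_map_of_mem _ hx)
          rw [← hPcomap]
          exact Subgroup.mem_comap.mpr h1
        · intro hx
          have h1 : mkQ (g * x * g⁻¹) ∈ Pb := Subgroup.mem_map_of_mem _ hx
          have h2 := (Subgroup.mem_normalizer_iff.mp ((Subgroup.normalizer (Pb : Set (G ⧸ Q))).inv_mem nb.2)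
            (mkQ (g * x * g⁻¹))).mp h1
          rw [← hg] at h2
          have h3 : (mkQ g)⁻¹ * mkQ (g * x * g⁻¹) * (mkQ g)⁻¹⁻¹ = mkQ x := by
            rw [map_mul, map_mul, map_inv]; group
          rw [h3] at h2
          rw [← hPcomap]
          exact Subgroup.mem_comap.mpr h2
      refine ⟨QuotientGroup.mk' (outKer P) ⟨g, hgN⟩, ?_⟩
      rw [hθ_mk]
      show QuotientGroup.mk' (outKer Pb) (φ ⟨g, hgN⟩) = QuotientGroup.mk' (outKer Pb) nb
      congr 1
      exact Subtype.ext hg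
    intro K hKn hKp
    have hK0 : K.comap θ = ⊥ := by
      apply hrQ _ (hKn.comap θ)
      intro x
      obtain ⟨b, hb⟩ := hKp ⟨θ (x : ↥(Subgroup.normalizer (P : Set G)) ⧸ outKer P), Subgroup.mem_comap.mp x.2⟩
      refine ⟨b, ?_⟩
      have h1 : θ ((x : ↥(Subgroup.normalizer (P : Set G)) ⧸ outKer P) ^ p ^ b) = 1 := by
        rw [map_pow]
        simpa using congrArg Subtype.val hb
      have h2 := hθ_inj _ h1
      exact Subtype.ext (by simpa using h2)
    rw [eq_bot_iff]
    intro k hk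
    obtain ⟨w, rfl⟩ := hθ_surj k
    have hw : w ∈ K.comap θ := Subgroup.mem_comap.mpr hk
    rw [hK0, Subgroup.mem_bot] at hw
    rw [hw, map_one]
    exact Subgroup.mem_bot.mpr rfl
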